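/- Let Δ be a positive self-adjoint operator with discrete spectrum consisting of eigenvalues λ_1 ≤ λ_2 ≤ ... (with multiplicity), such that tr e^{-tΔ} = ∑_n e^{-tλ_n} < ∞ for all t > 0 and tr e^{-tΔ} = O(t^{-s_0}) as t → 0⁺ for some s_0 ∈ ℝ. Let F : (0,∞) → ℝ satisfy F(s) = O(s^{-1} e^{-s}) as s → ∞. Fix s_k < s_0 and m > s_0 - s_k, and set ε(Λ) = m log Λ / Λ. Then ∑_{λ_n > Λ} F(λ_n ε(Λ)) = o(ε(Λ)^{-s_k}) as Λ → ∞. -/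

import Mathlib

open MeasureTheory Filter Asymptotics Set Real Topology

theorem tail_sum_estimate
    (lam : ℕ → ℝ) (hlam_mono : Monotone lam) (hlam_pos : ∀ n, 0 < lam n)
    (hlam_top : Tendsto lam atTop atTop)
    (hsum : ∀ t : ℝ, 0 < t → Summable fun n => Real.exp (-(t * lam n)))
    (s₀ : ℝ)
    (htrace : (fun t : ℝ => ∑' n, Real.exp (-(t * lam n)))
        =O[𝓝[>] (0 : ℝ)] fun t : ℝ => t ^ (-s₀))
    (F : ℝ → ℝ)
    (hF : F =O[atTop] fun s : ℝ => s⁻¹ * Real.exp (-s))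
    (sk : ℝ) (hsk : sk < s₀) (m : ℝ) (hm : s₀ - sk < m) :
    (fun Λ : ℝ =>
        ∑' n, if Λ < lam n then F (lam n * (m * Real.log Λ / Λ)) else 0)
      =o[atTop] fun Λ : ℝ => (m * Real.log Λ / Λ) ^ (-sk) := by
  have hd : 0 < s₀ - sk := sub_pos.mpr hsk
  have hm0 : 0 < m := hd.trans hm
  set ε : ℝ → ℝ := fun Λ => m * Real.log Λ / Λ with hεdef
  set θ : ℝ := (s₀ - sk + m) / (2 * m) with hθdef
  set a : ℝ := (m - (s₀ - sk)) / (2 * m) with hadef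
  have ha : 0 < a := div_pos (by linarith) (by linarith)
  have hθ : 0 < θ := div_pos (by linarith) (by linarith)
  have hθa : θ + a = 1 := by
    rw [hθdef, hadef, ← add_div, div_eq_one_iff_eq (by positivity)]
    ring
  set c : ℝ := θ * m - (s₀ - sk) with hcdef
  have hc : 0 < c := by
    have hth : θ * m = (s₀ - sk + m) / 2 := by
      rw [hθdef]; field_simp
    rw [hcdef, hth]; linarith
  -- F bound
  obtain ⟨C, hC, hCB⟩ := hF.exists_pos
  have hFbd : ∀ᶠ s in atTop, |F s| ≤ C * Real.exp (-s) := by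
    filter_upwards [hCB.bound, eventually_ge_atTop (1 : ℝ)] with s hs hs1
    have h1 : ‖s⁻¹ * Real.exp (-s)‖ ≤ Real.exp (-s) := by
      rw [norm_mul, Real.norm_eq_abs, Real.norm_eq_abs,
        abs_of_pos (Real.exp_pos _), abs_of_nonneg (inv_nonneg.mpr (by linarith))]
      have : s⁻¹ ≤ 1 := inv_le_one_of_one_le₀ hs1
      nlinarith [Real.exp_pos (-s)]
    calc |F s| = ‖F s‖ := rfl
      _ ≤ C * ‖s⁻¹ * Real.exp (-s)‖ := hs
      _ ≤ C * Real.exp (-s) := by nlinarith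
  obtain ⟨s₁, hs₁⟩ := eventually_atTop.mp hFbd
  -- trace bound
  obtain ⟨C', hC', hCB'⟩ := htrace.exists_pos
  have htr : ∀ᶠ t in 𝓝[>] (0 : ℝ),
      ∑' n, Real.exp (-(t * lam n)) ≤ C' * t ^ (-s₀) := by
    filter_upwards [hCB'.bound, self_mem_nhdsWithin] with t ht ht0
    have ht0 : (0 : ℝ) < t := ht0
    have h2 : ‖t ^ (-s₀)‖ = t ^ (-s₀) := abs_of_pos (Real.rpow_pos_of_pos ht0 _)
    calc ∑' n, Real.exp (-(t * lam n)) ≤ ‖∑' n, Real.exp (-(t * lam n))‖ := le_abs_self _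
      _ ≤ C' * ‖t ^ (-s₀)‖ := ht
      _ = C' * t ^ (-s₀) := by rw [h2]
  -- ε tends to 0 within Ioi
  have hεto0 : Tendsto ε atTop (𝓝 0) := by
    have hl : Tendsto (fun x : ℝ => Real.log x / x) atTop (𝓝 0) := by
      have := Real.isLittleO_log_id_atTop
      rw [isLittleO_iff_tendsto'] at this
      · exact this
      · filter_upwards [eventually_gt_atTop (0 : ℝ)] with x hx h; simp [hx.ne'] at h
    have : Tendsto (fun x : ℝ => m * (Real.log x / x)) atTop (𝓝 (m * 0)) :=
      hl.const_mul m
    simpa [hεdef, mul_div_assoc] using this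
  have hεpos : ∀ᶠ Λ in atTop, 0 < ε Λ := by
    filter_upwards [eventually_gt_atTop (1 : ℝ)] with Λ hΛ
    exact div_pos (mul_pos hm0 (Real.log_pos hΛ)) (by linarith)
  have haε : Tendsto (fun Λ => a * ε Λ) atTop (𝓝[>] (0 : ℝ)) := by
    rw [tendsto_nhdsWithin_iff]
    constructor
    · simpa using hεto0.const_mul a
    · filter_upwards [hεpos] with Λ hΛ
      exact mul_pos ha hΛ
  have htrA : ∀ᶠ Λ in atTop,
      ∑' n, Real.exp (-(a * ε Λ * lam n)) ≤ C' * (a * ε Λ) ^ (-s₀) :=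
    haε.eventually htr
  -- main bound
  have key : ∀ᶠ Λ in atTop,
      ‖∑' n, if Λ < lam n then F (lam n * ε Λ) else 0‖ ≤
        C * C' * ‖Λ ^ (-(θ * m)) * (a * ε Λ) ^ (-s₀)‖ := by
    have hlog : ∀ᶠ Λ in atTop, s₁ ≤ m * Real.log Λ := by
      have : Tendsto (fun Λ : ℝ => m * Real.log Λ) atTop atTop :=
        Real.tendsto_log_atTop.const_mul_atTop hm0
      exact this.eventually_ge_atTop s₁
    filter_upwards [eventually_gt_atTop (1 : ℝ), hlog, htrA, hεpos] with Λ hΛ1 hΛlog htrb hε0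
    have hΛ0 : (0 : ℝ) < Λ := by linarith
    have hεΛ : Λ * ε Λ = m * Real.log Λ := by
      simp only [hεdef]; field_simp
    set t := a * ε Λ with htdef
    have ht0 : 0 < t := mul_pos ha hε0
    -- termwise bound
    have hterm : ∀ n, ‖if Λ < lam n then F (lam n * ε Λ) else 0‖ ≤
        C * Λ ^ (-(θ * m)) * Real.exp (-(t * lam n)) := by
      intro n
      have hrpos : 0 < C * Λ ^ (-(θ * m)) * Real.exp (-(t * lam n)) :=
        mul_pos (mul_pos hC (Real.rpow_pos_of_pos hΛ0 _)) (Real.exp_pos _)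
      by_cases hn : Λ < lam n
      · rw [if_pos hn, Real.norm_eq_abs]
        have hlε : m * Real.log Λ ≤ lam n * ε Λ := by
          rw [← hεΛ]
          exact mul_le_mul_of_nonneg_right hn.le hε0.le
        have hF1 : |F (lam n * ε Λ)| ≤ C * Real.exp (-(lam n * ε Λ)) :=
          hs₁ _ (le_trans hΛlog hlε)
        have hexp : Real.exp (-(lam n * ε Λ)) ≤
            Λ ^ (-(θ * m)) * Real.exp (-(t * lam n)) := by
          rw [Real.rpow_def_of_pos hΛ0, ← Real.exp_add]
          apply Real.exp_le_exp.mpr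
          have h1 : Real.log Λ * (-(θ * m)) = -(θ * (Λ * ε Λ)) := by
            rw [hεΛ]; ring
          rw [h1, htdef]
          have hkey : θ * (Λ * ε Λ) ≤ θ * (lam n * ε Λ) :=
            mul_le_mul_of_nonneg_left
              (mul_le_mul_of_nonneg_right hn.le hε0.le) hθ.le
          have hsplit : -(lam n * ε Λ) = -(θ * (lam n * ε Λ)) + -(a * ε Λ * lam n) := by
            have hth : θ = 1 - a := by linarith
            rw [hth]; ring
          rw [hsplit]
          linarith
        calc |F (lam n * ε Λ)| ≤ C * Real.exp (-(lam n * ε Λ)) := hF1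
          _ ≤ C * (Λ ^ (-(θ * m)) * Real.exp (-(t * lam n))) :=
            mul_le_mul_of_nonneg_left hexp hC.le
          _ = C * Λ ^ (-(θ * m)) * Real.exp (-(t * lam n)) := by ring
      · rw [if_neg hn]
        simpa using hrpos.le
    have hhs : HasSum (fun n => C * Λ ^ (-(θ * m)) * Real.exp (-(t * lam n)))
        (C * Λ ^ (-(θ * m)) * ∑' n, Real.exp (-(t * lam n))) :=
      (hsum t ht0).hasSum.mul_left _
    have h3 := tsum_of_norm_bounded hhs hterm
    have h4 : C * Λ ^ (-(θ * m)) * ∑' n, Real.exp (-(t * lam n)) ≤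
        C * C' * (Λ ^ (-(θ * m)) * (a * ε Λ) ^ (-s₀)) := by
      have := mul_le_mul_of_nonneg_left htrb
        (mul_nonneg hC.le (Real.rpow_pos_of_pos hΛ0 (-(θ * m))).le)
      calc C * Λ ^ (-(θ * m)) * ∑' n, Real.exp (-(t * lam n))
          ≤ C * Λ ^ (-(θ * m)) * (C' * (a * ε Λ) ^ (-s₀)) := this
        _ = C * C' * (Λ ^ (-(θ * m)) * (a * ε Λ) ^ (-s₀)) := by ring
    refine le_trans (le_trans h3 h4) ?_
    have : Λ ^ (-(θ * m)) * (a * ε Λ) ^ (-s₀) ≤ ‖Λ ^ (-(θ * m)) * (a * ε Λ) ^ (-s₀)‖ :=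
      le_abs_self _
    nlinarith [mul_pos hC hC']
  have hO : (fun Λ : ℝ => ∑' n, if Λ < lam n then F (lam n * ε Λ) else 0)
      =O[atTop] fun Λ => Λ ^ (-(θ * m)) * (a * ε Λ) ^ (-s₀) :=
    IsBigO.of_bound _ key
  -- little-o of the comparison function
  have ho : (fun Λ : ℝ => Λ ^ (-(θ * m)) * (a * ε Λ) ^ (-s₀))
      =o[atTop] fun Λ => ε Λ ^ (-sk) := by
    rw [isLittleO_iff_tendsto']
    · have heq : ∀ᶠ Λ in atTop,
          Λ ^ (-(θ * m)) * (a * ε Λ) ^ (-s₀) / ε Λ ^ (-sk) =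
            a ^ (-s₀) * ((m * Real.log Λ) ^ (sk - s₀) * Λ ^ (-c)) := by
        filter_upwards [eventually_gt_atTop (1 : ℝ), hεpos] with Λ hΛ1 hε0
        have hΛ0 : (0 : ℝ) < Λ := by linarith
        have hml : 0 < m * Real.log Λ := mul_pos hm0 (Real.log_pos hΛ1)
        rw [Real.mul_rpow ha.le hε0.le]
        have h6 : ε Λ ^ (sk - s₀) = (m * Real.log Λ) ^ (sk - s₀) * Λ ^ (s₀ - sk) := by
          simp only [hεdef]
          rw [Real.div_rpow hml.le hΛ0.le, div_eq_mul_inv, ← Real.rpow_neg hΛ0.le, neg_sub]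
        have h7 : Λ ^ (-(θ * m)) * Λ ^ (s₀ - sk) = Λ ^ (-c) := by
          rw [← Real.rpow_add hΛ0]
          congr 1
          rw [hcdef]; ring
        have h8 : ε Λ ^ (-s₀) = ε Λ ^ (sk - s₀) * ε Λ ^ (-sk) := by
          rw [← Real.rpow_add hε0]
          congr 1
          ring
        have hεsk : (0 : ℝ) < ε Λ ^ (-sk) := Real.rpow_pos_of_pos hε0 _
        rw [div_eq_iff hεsk.ne', h8, h6, ← h7]
        ring
      rw [tendsto_congr' heq]
      have t1 : Tendsto (fun Λ : ℝ => (m * Real.log Λ) ^ (sk - s₀)) atTop (𝓝 0) := by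
        have h8 : Tendsto (fun Λ : ℝ => m * Real.log Λ) atTop atTop :=
          Real.tendsto_log_atTop.const_mul_atTop hm0
        have h9 : Tendsto (fun x : ℝ => x ^ (-(s₀ - sk))) atTop (𝓝 0) :=
          tendsto_rpow_neg_atTop hd
        have := h9.comp h8
        simpa [neg_sub, Function.comp_def] using this
      have t2 : Tendsto (fun Λ : ℝ => Λ ^ (-c)) atTop (𝓝 0) :=
        tendsto_rpow_neg_atTop hc
      have := (t1.mul t2).const_mul (a ^ (-s₀))
      simpa using this
    · filter_upwards [hεpos] with Λ hε0 h
      exact absurd h (Real.rpow_pos_of_pos hε0 _).ne'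
  exact hO.trans_isLittleO ho
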